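/- If two reduction relations R₁ and R₂ satisfy the local commutation property — whenever t₀ →_{R₂} t₁ and t₀ →_{R₁} t₂ there exists t₃ with t₁ →*_{R₁} t₃ and t₂ →^{=}_{R₂} t₃ (i.e., zero or one R₂-step) — then R₁ and R₂ commute: whenever t₀ →*_{R₂} t₁ and t₀ →*_{R₁} t₂ there exists t₃ with t₁ →*_{R₁} t₃ and t₂ →*_{R₂} t₃. -/
import Mathlib


/-- If whenever t₀ →_{R₂} t₁ and t₀ →_{R₁} t₂ there is t₃ with
t₁ →*_{R₁} t₃ and t₂ →^=_{R₂} t₃ (zero or one R₂-step), then R₁ and R₂ commute. -/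
theorem local_commutation_implies_commutation {α : Type*} (R₁ R₂ : α → α → Prop)
    (h : ∀ t₀ t₁ t₂, R₂ t₀ t₁ → R₁ t₀ t₂ →
      ∃ t₃, Relation.ReflTransGen R₁ t₁ t₃ ∧ Relation.ReflGen R₂ t₂ t₃) :
    ∀ t₀ t₁ t₂, Relation.ReflTransGen R₂ t₀ t₁ → Relation.ReflTransGen R₁ t₀ t₂ →
      ∃ t₃, Relation.ReflTransGen R₁ t₁ t₃ ∧ Relation.ReflTransGen R₂ t₂ t₃ := by
  have strip : ∀ t₀ t₁ t₂, R₂ t₀ t₁ → Relation.ReflTransGen R₁ t₀ t₂ →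
      ∃ t₃, Relation.ReflTransGen R₁ t₁ t₃ ∧ Relation.ReflGen R₂ t₂ t₃ := by
    intro t₀ t₁ t₂ h2 h1
    induction h1 with
    | refl => exact ⟨t₁, .refl, .single h2⟩
    | tail hb hr ih =>
      obtain ⟨u, hu1, hu2⟩ := ih
      cases hu2 with
      | refl => exact ⟨_, hu1.tail hr, .refl⟩
      | single hs =>
        obtain ⟨v, hv1, hv2⟩ := h _ _ _ hs hr
        exact ⟨v, hu1.trans hv1, hv2⟩
  intro t₀ t₁ t₂ h2 h1
  induction h2 generalizing t₂ with
  | refl => exact ⟨t₂, h1, .refl⟩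
  | tail hb hr ih =>
    obtain ⟨u, hu1, hu2⟩ := ih _ h1
    obtain ⟨v, hv1, hv2⟩ := strip _ _ _ hr hu1
    exact ⟨v, hv1, hu2.trans hv2.to_reflTransGen⟩
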